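/- Let (L, [·,·], ρ) be a Lie–Rinehart algebra over R and ∇ : Der(R) × L → L a connection, with curvature R_∇. Then for all X₁, X₂ ∈ Der(R) and a₁, a₂ ∈ L the following identity (matched pair condition (M9) for the tangent double of a Lie algebroid) holds: −Rᵇᵃˢ_∇(a₁,a₂)[X₁,X₂] + ∇_{X₁}(Rᵇᵃˢ_∇(a₁,a₂)X₂) − ∇_{X₂}(Rᵇᵃˢ_∇(a₁,a₂)X₁) − Rᵇᵃˢ_∇(∇_{X₁}a₁,a₂)X₂ − Rᵇᵃˢ_∇(a₁,∇_{X₁}a₂)X₂ + Rᵇᵃˢ_∇(∇_{X₂}a₁,a₂)X₁ + Rᵇᵃˢ_∇(a₁,∇_{X₂}a₂)X₁ = −R_∇(X₁,X₂)[a₁,a₂] + ∇ᵇᵃˢ_{a₁}(R_∇(X₁,X₂)a₂) − ∇ᵇᵃˢ_{a₂}(R_∇(X₁,X₂)a₁) − R_∇(∇ᵇᵃˢ_{a₁}X₁, X₂)a₂ − R_∇(X₁, ∇ᵇᵃˢ_{a₁}X₂)a₂ + R_∇(∇ᵇᵃˢ_{a₂}X₁, X₂)a₁ + R_∇(X₁,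 ∇ᵇᵃˢ_{a₂}X₂)a₁. -/
import Mathlib


/-- A Lie–Rinehart algebra over a commutative `ℝ`-algebra `R`: an `R`-module `L`
with an `ℝ`-bilinear Lie bracket and an `R`-linear anchor `ρ : L → Der(R)` which is a
morphism of Lie algebras and satisfies the Leibniz rule. -/
structure LieRinehart (R : Type*) [CommRing R] [Algebra ℝ R]
    (L : Type*) [AddCommGroup L] [Module R L] where
  bracket : L → L → L
  bracket_add_left : ∀ x y z : L, bracket (x + y) z = bracket x z + bracket y z
  bracket_add_right : ∀ x y z : L, bracket x (y + z) = bracket x y + bracket x z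
  bracket_real_left : ∀ (r : ℝ) (x y : L),
    bracket ((algebraMap ℝ R r) • x) y = (algebraMap ℝ R r) • bracket x y
  bracket_real_right : ∀ (r : ℝ) (x y : L),
    bracket x ((algebraMap ℝ R r) • y) = (algebraMap ℝ R r) • bracket x y
  bracket_antisymm : ∀ x y : L, bracket x y = - bracket y x
  bracket_jacobi : ∀ x y z : L,
    bracket x (bracket y z) = bracket (bracket x y) z + bracket y (bracket x z)
  anchor : L →ₗ[R] Derivation ℝ R R
  anchor_bracket : ∀ x y : L, anchor (bracket x y) = ⁅anchor x, anchor y⁆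
  leibniz : ∀ (f : R) (x y : L),
    bracket x (f • y) = f • bracket x y + (anchor x f) • y

/-- A connection on the `R`-module `E` along `Der(R)`. -/
structure DerConnection (R : Type*) [CommRing R] [Algebra ℝ R]
    (E : Type*) [AddCommGroup E] [Module R E] where
  conn : Derivation ℝ R R → E → E
  conn_add_left : ∀ (X Y : Derivation ℝ R R) (e : E), conn (X + Y) e = conn X e + conn Y e
  conn_add_right : ∀ (X : Derivation ℝ R R) (e e' : E), conn X (e + e') = conn X e + conn X e'
  conn_smul_left : ∀ (f : R) (X : Derivation ℝ R R) (e : E), conn (f • X) e = f • conn X e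
  conn_leibniz : ∀ (f : R) (X : Derivation ℝ R R) (e : E),
    conn X (f • e) = f • conn X e + (X f) • e

variable {R : Type*} [CommRing R] [Algebra ℝ R]
variable {L : Type*} [AddCommGroup L] [Module R L]

/-- The curvature `R_∇(X,Y)e = ∇_X ∇_Y e − ∇_Y ∇_X e − ∇_{[X,Y]} e` of a connection. -/
def DerConnection.curv {E : Type*} [AddCommGroup E] [Module R E]
    (N : DerConnection R E) (X Y : Derivation ℝ R R) (e : E) : E :=
  N.conn X (N.conn Y e) - N.conn Y (N.conn X e) - N.conn ⁅X, Y⁆ e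

/-- The basic connection `∇ᵇᵃˢ : L × L → L`, `∇ᵇᵃˢ_a a' = [a,a'] + ∇_{ρ(a')} a`. -/
def basL (LR : LieRinehart R L) (N : DerConnection R L) (a a' : L) : L :=
  LR.bracket a a' + N.conn (LR.anchor a') a

/-- The basic connection `∇ᵇᵃˢ : L × Der(R) → Der(R)`, `∇ᵇᵃˢ_a X = [ρ(a),X] + ρ(∇_X a)`. -/
def basD (LR : LieRinehart R L) (N : DerConnection R L) (a : L) (X : Derivation ℝ R R) :
    Derivation ℝ R R :=
  ⁅LR.anchor a, X⁆ + LR.anchor (N.conn X a)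

/-- The basic curvature `Rᵇᵃˢ_∇ : L × L × Der(R) → L`. -/
def basCurv (LR : LieRinehart R L) (N : DerConnection R L) (a₁ a₂ : L)
    (X : Derivation ℝ R R) : L :=
  - N.conn X (LR.bracket a₁ a₂) + LR.bracket (N.conn X a₁) a₂ + LR.bracket a₁ (N.conn X a₂)
    + N.conn (basD LR N a₂ X) a₁ - N.conn (basD LR N a₁ X) a₂

section Helpers
variable {E : Type*} [AddCommGroup E] [Module R E]

lemma conn_zero_right (N : DerConnection R E) (X : Derivation ℝ R R) : N.conn X 0 = 0 := by
  have h := N.conn_add_right X 0 0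
  rw [add_zero] at h
  have h2 : N.conn X 0 + N.conn X 0 = N.conn X 0 + 0 := by rw [add_zero]; exact h.symm
  exact add_left_cancel h2

lemma conn_neg_right (N : DerConnection R E) (X : Derivation ℝ R R) (e : E) :
    N.conn X (-e) = -N.conn X e := by
  have h := N.conn_add_right X e (-e)
  rw [add_neg_cancel, conn_zero_right] at h
  exact eq_neg_of_add_eq_zero_right h.symm

lemma conn_sub_right (N : DerConnection R E) (X : Derivation ℝ R R) (e e' : E) :
    N.conn X (e - e') = N.conn X e - N.conn X e' := by
  rw [sub_eq_add_neg, N.conn_add_right, conn_neg_right, sub_eq_add_neg]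

lemma conn_zero_left (N : DerConnection R E) (e : E) : N.conn 0 e = 0 := by
  have h := N.conn_add_left 0 0 e
  rw [add_zero] at h
  have h2 : N.conn 0 e + N.conn 0 e = N.conn 0 e + 0 := by rw [add_zero]; exact h.symm
  exact add_left_cancel h2

lemma conn_neg_left (N : DerConnection R E) (X : Derivation ℝ R R) (e : E) :
    N.conn (-X) e = -N.conn X e := by
  have h := N.conn_add_left X (-X) e
  rw [add_neg_cancel, conn_zero_left] at h
  exact eq_neg_of_add_eq_zero_right h.symm

lemma conn_sub_left (N : DerConnection R E) (X Y : Derivation ℝ R R) (e : E) :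
    N.conn (X - Y) e = N.conn X e - N.conn Y e := by
  rw [sub_eq_add_neg, N.conn_add_left, conn_neg_left, sub_eq_add_neg]

end Helpers

section BHelpers
variable (LR : LieRinehart R L)

lemma br_zero_left (y : L) : LR.bracket 0 y = 0 := by
  have h := LR.bracket_add_left 0 0 y
  rw [add_zero] at h
  have h2 : LR.bracket 0 y + LR.bracket 0 y = LR.bracket 0 y + 0 := by rw [add_zero]; exact h.symm
  exact add_left_cancel h2

lemma br_zero_right (x : L) : LR.bracket x 0 = 0 := by
  have h := LR.bracket_add_right x 0 0
  rw [add_zero] at h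
  have h2 : LR.bracket x 0 + LR.bracket x 0 = LR.bracket x 0 + 0 := by rw [add_zero]; exact h.symm
  exact add_left_cancel h2

lemma br_neg_left (x y : L) : LR.bracket (-x) y = -LR.bracket x y := by
  have h := LR.bracket_add_left x (-x) y
  rw [add_neg_cancel, br_zero_left] at h
  exact eq_neg_of_add_eq_zero_right h.symm

lemma br_neg_right (x y : L) : LR.bracket x (-y) = -LR.bracket x y := by
  have h := LR.bracket_add_right x y (-y)
  rw [add_neg_cancel, br_zero_right] at h
  exact eq_neg_of_add_eq_zero_right h.symm

lemma br_sub_left (x y z : L) : LR.bracket (x - y) z = LR.bracket x z - LR.bracket y z := by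
  rw [sub_eq_add_neg, LR.bracket_add_left, br_neg_left, sub_eq_add_neg]

lemma br_sub_right (x y z : L) : LR.bracket x (y - z) = LR.bracket x y - LR.bracket x z := by
  rw [sub_eq_add_neg, LR.bracket_add_right, br_neg_right, sub_eq_add_neg]

end BHelpers

/-- matched pair condition (M9) for the tangent double of a Lie algebroid. -/
theorem matched_pair_M9
    (LR : LieRinehart R L) (N : DerConnection R L) :
    ∀ (X₁ X₂ : Derivation ℝ R R) (a₁ a₂ : L),
      - basCurv LR N a₁ a₂ ⁅X₁, X₂⁆
      + N.conn X₁ (basCurv LR N a₁ a₂ X₂) - N.conn X₂ (basCurv LR N a₁ a₂ X₁)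
      - basCurv LR N (N.conn X₁ a₁) a₂ X₂ - basCurv LR N a₁ (N.conn X₁ a₂) X₂
      + basCurv LR N (N.conn X₂ a₁) a₂ X₁ + basCurv LR N a₁ (N.conn X₂ a₂) X₁
      = - N.curv X₁ X₂ (LR.bracket a₁ a₂)
        + basL LR N a₁ (N.curv X₁ X₂ a₂) - basL LR N a₂ (N.curv X₁ X₂ a₁)
        - N.curv (basD LR N a₁ X₁) X₂ a₂ - N.curv X₁ (basD LR N a₁ X₂) a₂
        + N.curv (basD LR N a₂ X₁) X₂ a₁ + N.curv X₁ (basD LR N a₂ X₂) a₁ := by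
  intro X₁ X₂ a₁ a₂
  simp only [basCurv, basL, basD, DerConnection.curv, LR.anchor_bracket, map_add, map_sub, map_neg,
    LR.bracket_add_left, LR.bracket_add_right, br_sub_left, br_sub_right, br_neg_left, br_neg_right,
    N.conn_add_left, N.conn_add_right, conn_sub_left, conn_sub_right, conn_neg_left, conn_neg_right,
    lie_add, add_lie, lie_sub, sub_lie, lie_neg, neg_lie]
  rw [LR.bracket_antisymm (N.conn ⁅X₁, X₂⁆ a₁) a₂,
    LR.bracket_antisymm (N.conn X₂ (N.conn X₁ a₁)) a₂,
    LR.bracket_antisymm (N.conn X₁ (N.conn X₂ a₁)) a₂,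
    leibniz_lie (LR.anchor a₁) X₁ X₂,
    leibniz_lie (LR.anchor a₂) X₁ X₂,
    ← lie_skew (LR.anchor (N.conn X₂ a₁)) X₁,
    ← lie_skew (LR.anchor (N.conn X₂ a₂)) X₁]
  simp only [N.conn_add_left, conn_neg_left]
  abel
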